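/- Operating-point-independent apparent impedance for the phase a-to-ground loop: suppose the fault-time network equation Y ⬝ (v_F, v_J, v_C, v_S) = (−Y_F ⬝ v_F, −Y_J ⬝ v_J, i_C + Y_C ⬝ v_C, i_S) and the prefault network equation Y ⬝ (v_F', v_J', v_C', v_S') = (0, −Y_J ⬝ v_J', i_C' + Y_C ⬝ v_C', i_S') hold, with v_S = v_S', i_C = i_C', and Y_LHS invertible, and set x := (ṽ_F, ṽ_J, ṽ_C, ĩ_S). Suppose z ≠ 0, m_T ≠ 1, the prefault line KVL v_F' = v_L' − (m_T·z) • i_L' holds, and the incremental remote current vector ĩ_R satisfies (D_R ⬝ x) − (D_F ⬝ x) = ((1−m_T)·z) • ĩ_R. Suppose furthermore the phase-a fault loop KVL v_La = m_T·z·(i_La + k·i_L0) + m_F·r_F·(i_La + i_Ra) holds, the prefault fault current is zero (i_La' + i_Ra' = 0), the a-components agree (ĩ_R at phase a equals i_Ra − i_Ra'), and the apparent current i_A := i_La + k·i_L0 is nonzero. Then the apparent impedance satisfies v_La / i_A = m_T·z + m_F·r_F·( (i_La − i_La') + (Ω ⬝ (v_L', i_L'))_a ) / i_A, where Ω = (1/((1−m_T)·z))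 • (D_R − D_F) ⬝ Y_LHS⁻¹ ⬝ Y_RHS ⬝ [I, −(m_T·z)•I]. In particular, the apparent impedance is determined by the fault parameters (m_T, m_F), the network matrices, the fault-time local measurements, and the prefault local measurements (v_L(t−δ), i_L(t−δ)) alone. -/

import Mathlib

open Matrix

/-- Assemble a vector on `ι = nF ⊕ nJ ⊕ nC ⊕ nS` from its four blocks. -/
def blockVec {nF nJ nC nS : Type*} (xF : nF → ℂ) (xJ : nJ → ℂ) (xC : nC → ℂ)
    (xS : nS → ℂ) : nF ⊕ nJ ⊕ nC ⊕ nS → ℂ :=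
  Sum.elim xF (Sum.elim xJ (Sum.elim xC xS))

/-- The correction matrix `B`: `Y_F` in the (F,F) block, `Y_J` in the (J,J)
block, `−Y_C` in the (C,C) block, the S block-column equal to `−I_S − Y_{·,S}`
(where `I_S` has the identity in the S rows and zeros elsewhere and `Y_{·,S}`
is the S block-column of `Y`), and zeros in all other blocks.  Then
`Y_LHS = Y + B`. -/
def Bmat {nF nJ nC nS : Type*}
    [DecidableEq nF] [DecidableEq nJ] [DecidableEq nC] [DecidableEq nS]
    (Y : Matrix (nF ⊕ nJ ⊕ nC ⊕ nS) (nF ⊕ nJ ⊕ nC ⊕ nS) ℂ)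
    (YF : Matrix nF nF ℂ) (YJ : Matrix nJ nJ ℂ) (YC : Matrix nC nC ℂ) :
    Matrix (nF ⊕ nJ ⊕ nC ⊕ nS) (nF ⊕ nJ ⊕ nC ⊕ nS) ℂ :=
  Matrix.of fun r c =>
    match r, c with
    | r', Sum.inr (Sum.inr (Sum.inr s)) =>
        -(if r' = Sum.inr (Sum.inr (Sum.inr s)) then 1 else 0)
          - Y r' (Sum.inr (Sum.inr (Sum.inr s)))
    | Sum.inl i, Sum.inl j => YF i j
    | Sum.inr (Sum.inl i), Sum.inr (Sum.inl j) => YJ i j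
    | Sum.inr (Sum.inr (Sum.inl i)), Sum.inr (Sum.inr (Sum.inl j)) => -YC i j
    | _, _ => 0

/-- The right-hand-side matrix `Y_RHS`: `−Y_F` in the F rows, zeros elsewhere. -/
def YRHSmat {nF nJ nC nS : Type*} (YF : Matrix nF nF ℂ) :
    Matrix (nF ⊕ nJ ⊕ nC ⊕ nS) nF ℂ :=
  Matrix.of fun r j =>
    match r with
    | Sum.inl i => -YF i j
    | _ => 0


/-- **Operating-point-independent apparent impedance for the phase a-to-ground
loop.**  Under the incremental network hypotheses (fault-time and prefault
network equations, periodic sources, invertible `Y_LHS`), the prefault line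
KVL, and the phase-a fault loop relations, the apparent impedance seen by the
relay equals `m_T·z + m_F·r_F·((i_La − i_La') + (Ω ⬝ (v_L', i_L'))_a)/i_A`:
it is determined by the fault parameters, the network matrices, the fault-time
local measurements, and the prefault local measurements alone. -/
theorem apparent_impedance_ag_operating_point_independent
    {nJ nC nS : Type*} [Fintype nJ] [Fintype nC] [Fintype nS]
    [DecidableEq nJ] [DecidableEq nC] [DecidableEq nS]
    (Y : Matrix (Fin 3 ⊕ nJ ⊕ nC ⊕ nS) (Fin 3 ⊕ nJ ⊕ nC ⊕ nS) ℂ)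
    (YF : Matrix (Fin 3) (Fin 3) ℂ) (YJ : Matrix nJ nJ ℂ) (YC : Matrix nC nC ℂ)
    (vF vF' : Fin 3 → ℂ) (vJ vJ' : nJ → ℂ) (vC vC' : nC → ℂ) (vS vS' : nS → ℂ)
    (iC iC' : nC → ℂ) (iS iS' : nS → ℂ)
    (vL' iL' iRinc : Fin 3 → ℂ) (z k : ℂ) (m_T m_F r_F : ℝ)
    (D_R D_F : Matrix (Fin 3) (Fin 3 ⊕ nJ ⊕ nC ⊕ nS) ℂ)
    (x : Fin 3 ⊕ nJ ⊕ nC ⊕ nS → ℂ)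
    (v_La i_La i_L0 i_Ra i_La' i_Ra' : ℂ)
    (hfault : Y *ᵥ blockVec vF vJ vC vS =
      blockVec (-(YF *ᵥ vF)) (-(YJ *ᵥ vJ)) (iC + YC *ᵥ vC) iS)
    (hpre : Y *ᵥ blockVec vF' vJ' vC' vS' =
      blockVec 0 (-(YJ *ᵥ vJ')) (iC' + YC *ᵥ vC') iS')
    (hvS : vS = vS') (hiC : iC = iC')
    (hinv : IsUnit (Y + Bmat Y YF YJ YC))
    (hx : x = blockVec (vF - vF') (vJ - vJ') (vC - vC') (iS - iS'))
    (hz : z ≠ 0) (hmT : m_T ≠ 1)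
    (hlineKVL : vF' = vL' - ((m_T : ℂ) * z) • iL')
    (hremote : D_R *ᵥ x - D_F *ᵥ x = ((1 - (m_T : ℂ)) * z) • iRinc)
    (hloopKVL : v_La = (m_T : ℂ) * z * (i_La + k * i_L0)
      + (m_F : ℂ) * (r_F : ℂ) * (i_La + i_Ra))
    (hprefaultF : i_La' + i_Ra' = 0)
    (hphaseA : iRinc 0 = i_Ra - i_Ra')
    (hA : i_La + k * i_L0 ≠ 0) :
    v_La / (i_La + k * i_L0) =
      (m_T : ℂ) * z + (m_F : ℂ) * (r_F : ℂ) *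
        ((i_La - i_La') +
          (((1 / ((1 - (m_T : ℂ)) * z)) •
            (((D_R - D_F) * (Y + Bmat Y YF YJ YC)⁻¹ * YRHSmat YF : Matrix (Fin 3) (Fin 3) ℂ) *
              Matrix.fromCols (1 : Matrix (Fin 3) (Fin 3) ℂ)
                (-((m_T : ℂ) * z) • (1 : Matrix (Fin 3) (Fin 3) ℂ)))) *ᵥ
            Sum.elim vL' iL') 0) / (i_La + k * i_L0) := by

  set c : ℂ := (1 - (m_T : ℂ)) * z with hc
  have hne : c ≠ 0 := by
    apply mul_ne_zero _ hz
    intro h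
    apply hmT
    have : (m_T : ℂ) = 1 := by linear_combination -h
    exact_mod_cast this
  -- key network identity
  have hYx : (Y + Bmat Y YF YJ YC) *ᵥ x = YRHSmat YF *ᵥ vF' := by
    subst hx hvS hiC
    funext r
    have hf := congrFun hfault r
    have hp := congrFun hpre r
    simp only [mulVec, dotProduct, blockVec, Bmat, YRHSmat, Matrix.add_apply,
      Matrix.of_apply, Fintype.sum_sum_type, Sum.elim_inl, Sum.elim_inr,
      Pi.add_apply, Pi.neg_apply, Pi.sub_apply, Pi.zero_apply] at hf hp ⊢
    cases r with
    | inl i =>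
        simp only [reduceCtorEq, if_false, Sum.elim_inl, Sum.elim_inr,
          mulVec, dotProduct, Pi.add_apply, Pi.neg_apply, Pi.zero_apply,
          add_mul, sub_mul, mul_sub, neg_zero, zero_mul, add_zero,
          zero_sub, neg_mul, Finset.sum_add_distrib, Finset.sum_sub_distrib, Finset.sum_neg_distrib] at hf hp ⊢
        linear_combination hf - hp
    | inr r =>
      cases r with
      | inl i =>
          simp only [reduceCtorEq, if_false, Sum.inr.injEq, Sum.elim_inl, Sum.elim_inr,
            mulVec, dotProduct, Pi.add_apply, Pi.neg_apply, Pi.zero_apply,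
            add_mul, sub_mul, mul_sub, neg_zero, zero_mul, add_zero,
            zero_sub, neg_mul, Finset.sum_add_distrib, Finset.sum_sub_distrib, Finset.sum_neg_distrib] at hf hp ⊢
          linear_combination hf - hp
      | inr r =>
        cases r with
        | inl i =>
            simp only [reduceCtorEq, if_false, Sum.inr.injEq, Sum.elim_inl, Sum.elim_inr,
              mulVec, dotProduct, Pi.add_apply, Pi.neg_apply, Pi.zero_apply,
              add_mul, sub_mul, mul_sub, neg_zero, zero_mul, add_zero,
              zero_sub, neg_mul, neg_neg, Finset.sum_add_distrib,
              Finset.sum_sub_distrib, Finset.sum_neg_distrib] at hf hp ⊢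
            linear_combination hf - hp
        | inr s =>
            simp only [reduceCtorEq, if_false, Sum.inr.injEq, Sum.inl.injEq,
              Sum.elim_inl, Sum.elim_inr,
              mulVec, dotProduct, Pi.add_apply, Pi.neg_apply, Pi.zero_apply,
              add_mul, sub_mul, mul_sub, zero_mul, add_zero,
              Finset.sum_add_distrib, Finset.sum_sub_distrib, Finset.sum_neg_distrib,
              ite_mul, one_mul, Finset.sum_ite_eq, Finset.mem_univ, if_true,
              neg_mul, neg_neg, neg_sub] at hf hp ⊢
            linear_combination hf - hp
  have hdet : IsUnit (Y + Bmat Y YF YJ YC).det :=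
    (Matrix.isUnit_iff_isUnit_det _).mp hinv
  have hxeq : x = (Y + Bmat Y YF YJ YC)⁻¹ *ᵥ (YRHSmat YF *ᵥ vF') := by
    rw [← hYx, Matrix.mulVec_mulVec, Matrix.nonsing_inv_mul _ hdet, Matrix.one_mulVec]
  have hcol : Matrix.fromCols (1 : Matrix (Fin 3) (Fin 3) ℂ)
      (-((m_T : ℂ) * z) • (1 : Matrix (Fin 3) (Fin 3) ℂ)) *ᵥ Sum.elim vL' iL' = vF' := by
    rw [Matrix.fromCols_mulVec_sumElim, hlineKVL]
    funext j
    simp [Matrix.neg_mulVec, Matrix.smul_mulVec, Matrix.one_mulVec, sub_eq_add_neg]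
  have hOmega : (((1 / c) •
        (((D_R - D_F) * (Y + Bmat Y YF YJ YC)⁻¹ * YRHSmat YF : Matrix (Fin 3) (Fin 3) ℂ) *
          Matrix.fromCols (1 : Matrix (Fin 3) (Fin 3) ℂ)
            (-((m_T : ℂ) * z) • (1 : Matrix (Fin 3) (Fin 3) ℂ)))) *ᵥ
        Sum.elim vL' iL') = iRinc := by
    rw [Matrix.smul_mulVec, ← Matrix.mulVec_mulVec, hcol]
    erw [← Matrix.mulVec_mulVec (M := (D_R - D_F) * (Y + Bmat Y YF YJ YC)⁻¹) (N := YRHSmat YF)]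
    rw [← Matrix.mulVec_mulVec, ← hxeq,
      Matrix.sub_mulVec, hremote, smul_smul, one_div,
      inv_mul_cancel₀ hne, one_smul]
  rw [hOmega, hphaseA]
  field_simp
  linear_combination hloopKVL + (m_F : ℂ) * (r_F : ℂ) * hprefaultF
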